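/- A Polish group is locally compact if and only if it is Weil complete (complete in its left uniformity) and locally Roelcke precompact. -/

import Mathlib

open scoped Pointwise

/-- A subset `A` of a topological group `G` is *Roelcke precompact* if for every
neighborhood `V` of the identity there is a finite set `F ⊆ G` with `A ⊆ V * F * V`,
where `V * F * V = {v * f * w : v, w ∈ V, f ∈ F}`. -/
def RoelckePrecompact {G : Type*} [Group G] [TopologicalSpace G] (A : Set G) : Prop :=
  ∀ V ∈ nhds (1 : G), ∃ F : Finset G, A ⊆ V * (F : Set G) * V

/-- A topological group is *locally Roelcke precompact* if some open neighborhood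
of the identity is Roelcke precompact. -/
def LocallyRoelckePrecompact (G : Type*) [Group G] [TopologicalSpace G] : Prop :=
  ∃ U : Set G, IsOpen U ∧ (1 : G) ∈ U ∧ RoelckePrecompact U

/-- The left uniformity of a topological group: the pullback under inversion of the
right uniformity `TopologicalGroup.toUniformSpace G`; its basic entourages are the sets
`{(f,g) | f⁻¹ * g ∈ V}` for `V` a neighborhood of the identity. -/
noncomputable def leftUniformity (G : Type*) [Group G] [TopologicalSpace G]
    [IsTopologicalGroup G] : UniformSpace G :=
  UniformSpace.comap (fun g : G => g⁻¹) (IsTopologicalGroup.rightUniformSpace G)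

section Aux

open Filter Set

variable {G : Type*} [Group G] [TopologicalSpace G] [IsTopologicalGroup G]

lemma aux_topology_eq : (leftUniformity G).toTopologicalSpace = ‹TopologicalSpace G› := by
  rw [leftUniformity, UniformSpace.toTopologicalSpace_comap]
  exact ((Homeomorph.inv G).isInducing.eq_induced).symm

lemma aux_uniformity_eq :
    @uniformity G (leftUniformity G) = Filter.comap (fun p : G × G => p.2⁻¹ * p.1) (nhds 1) := by
  have h : @uniformity G (leftUniformity G)
      = Filter.comap (fun p : G × G => (p.1⁻¹, p.2⁻¹))
        (Filter.comap (fun p : G × G => p.2 * p.1⁻¹) (nhds 1)) := rfl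
  rw [h, Filter.comap_comap]
  congr 1
  ext p
  simp [Function.comp, div_eq_mul_inv]

lemma tendsto_of_leftCauchy (hcomp : @CompleteSpace G (leftUniformity G)) (u : ℕ → G)
    (h : ∀ V ∈ nhds (1:G), ∃ N : ℕ, ∀ m, N ≤ m → ∀ n, N ≤ n → (u n)⁻¹ * u m ∈ V) :
    ∃ x : G, Filter.Tendsto u Filter.atTop (nhds x) := by
  have hcauchy : @Cauchy G (leftUniformity G) (Filter.map u Filter.atTop) := by
    constructor
    · exact Filter.map_neBot
    · rw [aux_uniformity_eq, Filter.prod_map_map_eq, ← Filter.map_le_iff_le_comap,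
        Filter.map_map]
      intro V hV
      rw [Filter.mem_map]
      apply Filter.mem_of_superset
        (Filter.prod_mem_prod (Filter.Ici_mem_atTop (h V hV).choose)
          (Filter.Ici_mem_atTop (h V hV).choose))
      rintro ⟨m, n⟩ ⟨hm, hn⟩
      exact (h V hV).choose_spec m hm n hn
  obtain ⟨x, hx⟩ := @CompleteSpace.complete G (leftUniformity G) hcomp _ hcauchy
  refine ⟨x, ?_⟩
  rw [aux_topology_eq] at hx
  exact hx

lemma closure_subset_mul (s : Set G) {V : Set G} (hV : V ∈ nhds (1:G)) :
    closure s ⊆ s * V := by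
  intro x hx
  have h1 : x • V⁻¹ ∈ nhds x := by
    simpa using smul_mem_nhds_smul x (inv_mem_nhds_one G hV)
  obtain ⟨z, hz1, hz2⟩ := mem_closure_iff_nhds.1 hx _ h1
  obtain ⟨w, hw, rfl⟩ := hz1
  refine Set.mem_mul.2 ⟨x • w, hz2, w⁻¹, Set.mem_inv.1 hw, ?_⟩
  simp [smul_eq_mul]

lemma weil_of_lc [LocallyCompactSpace G] : @CompleteSpace G (leftUniformity G) := by
  suffices h : ∀ f : Filter G, @Cauchy G (leftUniformity G) f →
      ∃ x, f ≤ @nhds G (leftUniformity G).toTopologicalSpace x by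
    exact @CompleteSpace.mk G (leftUniformity G) (fun {f} hf => h f hf)
  intro f hf
  obtain ⟨K, hKc, hKn⟩ := exists_compact_mem_nhds (1 : G)
  haveI : f.NeBot := hf.1
  have hent : {p : G × G | p.2⁻¹ * p.1 ∈ K} ∈ @uniformity G (leftUniformity G) := by
    rw [aux_uniformity_eq]; exact Filter.preimage_mem_comap hKn
  obtain ⟨A, hA, B, hB, hAB⟩ := Filter.mem_prod_iff.1 (hf.2 hent)
  obtain ⟨b₀, hb₀⟩ := hf.1.nonempty_of_mem hB
  have hAK : A ⊆ b₀ • K := by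
    intro x hx
    exact ⟨b₀⁻¹ * x, hAB (Set.mk_mem_prod hx hb₀), by simp [smul_eq_mul, mul_assoc]⟩
  have hcK : IsCompact (b₀ • K) := hKc.smul b₀
  obtain ⟨x, -, hx⟩ := hcK (le_principal_iff.2 (Filter.mem_of_superset hA hAK))
  refine ⟨x, ?_⟩
  have hx' : @ClusterPt G (leftUniformity G).toTopologicalSpace x f := by
    rw [aux_topology_eq]; exact hx
  exact @le_nhds_of_cauchy_adhp G (leftUniformity G) f x hf hx'

end Aux

/-- A Polish group is locally compact if and only if it is Weil complete (complete in its
left uniformity) and locally Roelcke precompact. -/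
theorem locallyCompact_iff_weilComplete_and_locallyRoelckePrecompact
    (G : Type*) [Group G] [TopologicalSpace G] [IsTopologicalGroup G] [PolishSpace G] :
    LocallyCompactSpace G ↔
      (@CompleteSpace G (leftUniformity G) ∧ LocallyRoelckePrecompact G) := by
  constructor
  · intro hlc
    refine ⟨weil_of_lc, ?_⟩
    obtain ⟨K, hKc, hKn⟩ := exists_compact_mem_nhds (1 : G)
    refine ⟨interior K, isOpen_interior, mem_interior_iff_mem_nhds.2 hKn, ?_⟩
    intro V hV
    have hcov : ∀ x ∈ K, x • V ∈ nhds x := fun x _ => by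
      simpa using smul_mem_nhds_smul x hV
    obtain ⟨t, htK, ht⟩ := hKc.elim_nhds_subcover (fun x => x • V) hcov
    refine ⟨t, ?_⟩
    intro z hz
    obtain ⟨x, hxt, hxz⟩ := Set.mem_iUnion₂.1 (ht (interior_subset hz))
    obtain ⟨v, hv, rfl⟩ := hxz
    exact Set.mem_mul.2 ⟨1 * x,
      Set.mem_mul.2 ⟨1, mem_of_mem_nhds hV, x, Finset.mem_coe.2 hxt, rfl⟩,
      v, hv, by simp [smul_eq_mul]⟩
  · rintro ⟨hcomp, U, hUo, hU1, hURP⟩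
    -- Construct a good sequence of neighborhoods of 1
    obtain ⟨V, hVbasis⟩ := (nhds (1 : G)).exists_antitone_basis
    have hVmem : ∀ k, V k ∈ nhds (1 : G) := fun k =>
      hVbasis.toHasBasis.mem_of_mem trivial
    have key : ∀ s : Set G, s ∈ nhds (1 : G) →
        ∃ t : Set G, t ∈ nhds (1 : G) ∧ t⁻¹ = t ∧ t * t ⊆ s := by
      intro s hs
      obtain ⟨t, ht, hmul⟩ := exists_nhds_one_split hs
      refine ⟨t ∩ t⁻¹, Filter.inter_mem ht (inv_mem_nhds_one G ht), ?_, ?_⟩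
      · rw [Set.inter_inv, inv_inv, Set.inter_comm]
      · rintro z hz
        obtain ⟨x, hx, y, hy, rfl⟩ := Set.mem_mul.1 hz
        exact hmul x hx.1 y hy.1
    choose! T hT1 hT2 hT3 using key
    obtain ⟨W, hW0, hWs⟩ : ∃ W : ℕ → Set G, W 0 = Set.univ ∧
        ∀ k, W (k + 1) = T (W k ∩ V k) :=
      ⟨fun n => Nat.rec Set.univ (fun k Wk => T (Wk ∩ V k)) n, rfl, fun k => rfl⟩
    have hW : ∀ k, W k ∈ nhds (1 : G) := by
      intro k
      induction k with
      | zero => rw [hW0]; exact Filter.univ_mem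
      | succ k ih => rw [hWs]; exact hT1 _ (Filter.inter_mem ih (hVmem k))
    have hWmem1 : ∀ k, (1 : G) ∈ W k := fun k => mem_of_mem_nhds (hW k)
    have hWsymm : ∀ k, (W k)⁻¹ = W k := by
      intro k
      cases k with
      | zero => rw [hW0]; exact Set.inv_univ
      | succ k => rw [hWs]; exact hT2 _ (Filter.inter_mem (hW k) (hVmem k))
    have hWmul : ∀ k, W (k + 1) * W (k + 1) ⊆ W k := by
      intro k
      rw [hWs]
      exact (hT3 _ (Filter.inter_mem (hW k) (hVmem k))).trans Set.inter_subset_left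
    have hWsub : ∀ k, W (k + 1) ⊆ W k := fun k x hx =>
      hWmul k (Set.mem_mul.2 ⟨x, hx, 1, hWmem1 _, mul_one x⟩)
    have hWanti : Antitone W := antitone_nat_of_succ_le hWsub
    have hWbig : ∀ s ∈ nhds (1 : G), ∃ k, W k ⊆ s := by
      intro s hs
      obtain ⟨k, -, hk⟩ := hVbasis.toHasBasis.mem_iff.1 hs
      refine ⟨k + 1, fun x hx => ?_⟩
      have hx2 : x ∈ W k ∩ V k := by
        rw [hWs] at hx
        refine hT3 _ (Filter.inter_mem (hW k) (hVmem k)) (Set.mem_mul.2 ⟨x, hx, 1, ?_, mul_one x⟩)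
        rw [← hWs]
        exact hWmem1 (k + 1)
      exact hk hx2.2
    -- Show that the closure of U is compact
    have hUc : IsCompact (closure U) := by
      rw [isCompact_iff_ultrafilter_le_nhds]
      intro F hF
      have hclU : closure U ∈ F := Filter.le_principal_iff.1 hF
      have hcov : ∀ k : ℕ, ∃ g : G, W (k + 1) * ({g} : Set G) * W (k + 1) ∈ F := by
        intro k
        obtain ⟨Fk, hFk⟩ := hURP (W (k + 2)) (hW (k + 2))
        have hsub : closure U ⊆ ⋃ g ∈ (Fk : Set G), W (k + 1) * ({g} : Set G) * W (k + 1) := by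
          intro z hz
          obtain ⟨u, hu, w, hw, rfl⟩ := Set.mem_mul.1 (closure_subset_mul U (hW (k + 2)) hz)
          obtain ⟨y, hy, w', hw', rfl⟩ := Set.mem_mul.1 (hFk hu)
          obtain ⟨v, hv, g, hg, rfl⟩ := Set.mem_mul.1 hy
          refine Set.mem_biUnion hg (Set.mem_mul.2 ⟨v * g,
            Set.mem_mul.2 ⟨v, hWsub (k + 1) hv, g, rfl, rfl⟩,
            w' * w, hWmul (k + 1) (Set.mem_mul.2 ⟨w', hw', w, hw, rfl⟩), by group⟩)
        obtain ⟨g, -, hg⟩ := (Ultrafilter.finite_biUnion_mem_iff Fk.finite_toSet).1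
          (Filter.mem_of_superset hclU hsub)
        exact ⟨g, hg⟩
      choose f hf using hcov
      have hrel : ∀ k : ℕ, ∃ p q : G, p ∈ W k ∧ q ∈ W k ∧ f (k + 1) = p * f k * q := by
        intro k
        obtain ⟨z, hz1, hz2⟩ := Ultrafilter.nonempty_of_mem (Filter.inter_mem (hf k) (hf (k + 1)))
        obtain ⟨y, hy, w, hw, hzeq⟩ := Set.mem_mul.1 hz1
        obtain ⟨x, hx, g, hgs, rfl⟩ := Set.mem_mul.1 hy
        obtain ⟨y', hy', w', hw', hzeq'⟩ := Set.mem_mul.1 hz2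
        obtain ⟨x', hx', g', hgs', rfl⟩ := Set.mem_mul.1 hy'
        rw [Set.mem_singleton_iff] at hgs hgs'
        subst hgs; subst hgs'
        have heq : x * f k * w = x' * f (k + 1) * w' := hzeq.trans hzeq'.symm
        refine ⟨x'⁻¹ * x, w * w'⁻¹, ?_, ?_, ?_⟩
        · refine hWmul k (Set.mem_mul.2 ⟨x'⁻¹, ?_, x, hx, rfl⟩)
          rw [← hWsymm (k + 1)]
          exact Set.inv_mem_inv.2 (hWsub (k + 1) hx')
        · refine hWmul k (Set.mem_mul.2 ⟨w, hw, w'⁻¹, ?_, rfl⟩)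
          rw [← hWsymm (k + 1)]
          exact Set.inv_mem_inv.2 (hWsub (k + 1) hw')
        · have h2 : f (k + 1) = x'⁻¹ * (x * f k * w) * w'⁻¹ := by
            rw [heq]; group
          rw [h2]; group
      choose p q hp hq hfrec using hrel
      obtain ⟨A, hA0, hAs⟩ : ∃ A : ℕ → G, A 0 = 1 ∧ ∀ k, A (k + 1) = p k * A k :=
        ⟨fun n => Nat.rec 1 (fun k Ak => p k * Ak) n, rfl, fun k => rfl⟩
      obtain ⟨B, hB0, hBs⟩ : ∃ B : ℕ → G, B 0 = 1 ∧ ∀ k, B (k + 1) = B k * q k :=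
        ⟨fun n => Nat.rec 1 (fun k Bk => Bk * q k) n, rfl, fun k => rfl⟩
      have hfAB : ∀ k, f k = A k * f 0 * B k := by
        intro k
        induction k with
        | zero => rw [hA0, hB0]; group
        | succ k ih => rw [hfrec k, ih, hAs, hBs]; group
      have hBclaim : ∀ n k, (B k)⁻¹ * B (k + n) ∈ W k * W k := by
        intro n
        induction n with
        | zero =>
          intro k
          have h1 : (B k)⁻¹ * B (k + 0) = 1 := by simp
          rw [h1]
          exact Set.mem_mul.2 ⟨1, hWmem1 k, 1, hWmem1 k, one_mul 1⟩
        | succ n ih =>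
          intro k
          have hkey : (B k)⁻¹ * B (k + (n + 1)) = q k * ((B (k + 1))⁻¹ * B ((k + 1) + n)) := by
            rw [show k + (n + 1) = (k + 1) + n by omega, hBs k]
            group
          rw [hkey]
          exact Set.mem_mul.2 ⟨q k, hq k, _, hWmul k (ih (k + 1)), rfl⟩
      have hAclaim : ∀ n k, A (k + n) * (A k)⁻¹ ∈ W k * W k := by
        intro n
        induction n with
        | zero =>
          intro k
          have h1 : A (k + 0) * (A k)⁻¹ = 1 := by simp
          rw [h1]
          exact Set.mem_mul.2 ⟨1, hWmem1 k, 1, hWmem1 k, one_mul 1⟩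
        | succ n ih =>
          intro k
          have hkey : A (k + (n + 1)) * (A k)⁻¹
              = (A ((k + 1) + n) * (A (k + 1))⁻¹) * p k := by
            rw [show k + (n + 1) = (k + 1) + n by omega, hAs k]
            group
          rw [hkey]
          exact Set.mem_mul.2 ⟨_, hWmul k (ih (k + 1)), p k, hp k, rfl⟩
      have hWWsub : ∀ {j n : ℕ}, j + 1 ≤ n → W n * W n ⊆ W j := fun {j n} hn =>
        (Set.mul_subset_mul (hWanti hn) (hWanti hn)).trans (hWmul j)
      have hBlim : ∃ β, Filter.Tendsto B Filter.atTop (nhds β) := by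
        apply tendsto_of_leftCauchy hcomp
        intro Vs hVs
        obtain ⟨j, hj⟩ := hWbig Vs hVs
        refine ⟨j + 1, fun m hm n hn => ?_⟩
        rcases le_or_gt n m with h | h
        · obtain ⟨d, rfl⟩ := Nat.exists_eq_add_of_le h
          exact hj (hWWsub hn (hBclaim d n))
        · obtain ⟨d, rfl⟩ := Nat.exists_eq_add_of_le h.le
          have h3 : (B m)⁻¹ * B (m + d) ∈ W j := hWWsub hm (hBclaim d m)
          have h4 : (B (m + d))⁻¹ * B m = ((B m)⁻¹ * B (m + d))⁻¹ := by group
          rw [h4]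
          refine hj ?_
          rw [← hWsymm j]
          exact Set.inv_mem_inv.2 h3
      have hClim : ∃ γ, Filter.Tendsto (fun k => (A k)⁻¹) Filter.atTop (nhds γ) := by
        apply tendsto_of_leftCauchy hcomp
        intro Vs hVs
        obtain ⟨j, hj⟩ := hWbig Vs hVs
        refine ⟨j + 1, fun m hm n hn => ?_⟩
        rcases le_or_gt m n with h | h
        · obtain ⟨d, rfl⟩ := Nat.exists_eq_add_of_le h
          have h3 : A (m + d) * (A m)⁻¹ ∈ W j := hWWsub hm (hAclaim d m)
          have h4 : ((fun k => (A k)⁻¹) (m + d))⁻¹ * (fun k => (A k)⁻¹) m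
              = A (m + d) * (A m)⁻¹ := by simp
          rw [h4]
          exact hj h3
        · obtain ⟨d, rfl⟩ := Nat.exists_eq_add_of_le h.le
          have h3 : A (n + d) * (A n)⁻¹ ∈ W j := hWWsub hn (hAclaim d n)
          have h4 : ((fun k => (A k)⁻¹) n)⁻¹ * (fun k => (A k)⁻¹) (n + d)
              = (A (n + d) * (A n)⁻¹)⁻¹ := by simp
          rw [h4]
          refine hj ?_
          rw [← hWsymm j]
          exact Set.inv_mem_inv.2 h3
      obtain ⟨β, hβ⟩ := hBlim
      obtain ⟨γ, hγ⟩ := hClim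
      have hαlim : Filter.Tendsto A Filter.atTop (nhds γ⁻¹) := by
        have h5 := hγ.inv
        simpa using h5
      have hflim : Filter.Tendsto f Filter.atTop (nhds (γ⁻¹ * f 0 * β)) := by
        have h6 : Filter.Tendsto (fun k => A k * f 0 * B k) Filter.atTop
            (nhds (γ⁻¹ * f 0 * β)) := (hαlim.mul tendsto_const_nhds).mul hβ
        exact h6.congr fun k => (hfAB k).symm
      set L := γ⁻¹ * f 0 * β with hL
      have hle : (F : Filter G) ≤ nhds L := by
        intro O hO
        have hcont : Filter.Tendsto (fun r : G × G × G => r.1 * r.2.1 * r.2.2)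
            (nhds 1 ×ˢ (nhds L ×ˢ nhds 1)) (nhds L) := by
          have h7 : Filter.Tendsto (fun r : G × G × G => r.1 * r.2.1 * r.2.2)
              (nhds (1, L, 1)) (nhds (1 * L * 1)) :=
            ((continuous_fst.mul (continuous_fst.comp continuous_snd)).mul
              (continuous_snd.comp continuous_snd)).tendsto (1, L, 1)
          rw [nhds_prod_eq, nhds_prod_eq] at h7
          simpa using h7
        obtain ⟨P, hP, QR, hQR, hsub⟩ := Filter.mem_prod_iff.1 (hcont hO)
        obtain ⟨Q, hQ, R, hR, hsub2⟩ := Filter.mem_prod_iff.1 hQR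
        obtain ⟨j, hjPR⟩ := hWbig (P ∩ R) (Filter.inter_mem hP hR)
        have hfQ : ∃ k, f k ∈ Q ∧ j ≤ k := by
          have h8 : ∀ᶠ k in Filter.atTop, f k ∈ Q :=
            hflim.eventually (Filter.eventually_of_mem hQ fun x hx => hx)
          exact ((h8.and (Filter.eventually_ge_atTop j)).exists)
        obtain ⟨k, hkQ, hkj⟩ := hfQ
        apply Filter.mem_of_superset (hf k)
        intro z hz
        obtain ⟨y, hy, w, hw, rfl⟩ := Set.mem_mul.1 hz
        obtain ⟨x, hx, g, hgs, rfl⟩ := Set.mem_mul.1 hy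
        rw [Set.mem_singleton_iff] at hgs
        subst hgs
        have hxP : x ∈ P := (hjPR (hWanti (hkj.trans (Nat.le_succ k)) hx)).1
        have hwR : w ∈ R := (hjPR (hWanti (hkj.trans (Nat.le_succ k)) hw)).2
        exact hsub (Set.mk_mem_prod hxP (hsub2 (Set.mk_mem_prod hkQ hwR)))
      refine ⟨L, ?_, hle⟩
      have h9 : L ∈ closure (closure U) :=
        mem_closure_iff_ultrafilter.2 ⟨F, hclU, hle⟩
      rwa [closure_closure] at h9
    exact hUc.locallyCompactSpace_of_mem_nhds_of_group
      (Filter.mem_of_superset (hUo.mem_nhds hU1) subset_closure)
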